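/- arXiv:0901.2991 — 5 statements merged into one kernel-verified Lean document; each statement's English description precedes it below -/
import Mathlib

section
/- Let ξ₁, ξ₂, b be real numbers with ξ₁ ≠ 0 and ξ₂² + b² > 0. Then the absolute value of the determinant of the matrix M satisfies |det M| = 2 (ξ₁² + ξ₂² + b²)^{3/2} / ((ξ₂² + b²) |ξ₁|) ≥ 2; in particular M is invertible. -/
open Complex Matrix

lemma det_aux (x k b r : ℂ) :
    (k*r + I*(x*b))/(k^2+b^2) * (-k/x - (x*k - I*(b*r))/(k^2+b^2))
      - (-I*b/x) * ((x*k + I*(b*r))/(k^2+b^2) - (x*k - I*(b*r))/(k^2+b^2))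
      + (-(k*r) + I*(x*b))/(k^2+b^2) * ((x*k + I*(b*r))/(k^2+b^2) + k/x)
    = -2*r*(k^2+b^2) * ((1/(k^2+b^2)) * (1/x) + x * (1/(k^2+b^2)) * (1/(k^2+b^2))) := by
  linear_combination (2*b^2*r*(1/(k^2+b^2))*(1/x)
    + 2*x*b^2*r*(1/(k^2+b^2))*(1/(k^2+b^2))) * Complex.I_sq

/-- the absolute value of the determinant of the mode-decomposition
matrix is `2 (ξ₁² + ξ₂² + b²)^{3/2} / ((ξ₂² + b²) |ξ₁|) ≥ 2`; in particular the
matrix is invertible. -/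
theorem abs_det_mode_matrix (ξ₁ ξ₂ b : ℝ) (hξ₁ : ξ₁ ≠ 0) (hs : ξ₂ ^ 2 + b ^ 2 > 0) :
    let r : ℝ := Real.sqrt (ξ₁ ^ 2 + ξ₂ ^ 2 + b ^ 2)
    let s : ℝ := ξ₂ ^ 2 + b ^ 2
    let M : Matrix (Fin 3) (Fin 3) ℂ :=
      !![((ξ₂ * r : ℝ) + Complex.I * (ξ₁ * b : ℝ)) / (s : ℝ),
          -Complex.I * (b : ℝ) / (ξ₁ : ℝ),
          ((-(ξ₂ * r) : ℝ) + Complex.I * (ξ₁ * b : ℝ)) / (s : ℝ);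
        ((ξ₁ * ξ₂ : ℝ) + Complex.I * (b * r : ℝ)) / (s : ℝ),
          -(ξ₂ : ℝ) / (ξ₁ : ℝ),
          ((ξ₁ * ξ₂ : ℝ) - Complex.I * (b * r : ℝ)) / (s : ℝ);
        1, 1, 1]
    ‖M.det‖ = 2 * r ^ 3 / (s * |ξ₁|) ∧
      2 ≤ ‖M.det‖ ∧ IsUnit M := by
  intro r s M
  have hr2 : r ^ 2 = ξ₁ ^ 2 + ξ₂ ^ 2 + b ^ 2 := by
    have : (0:ℝ) ≤ ξ₁ ^ 2 + ξ₂ ^ 2 + b ^ 2 := by positivity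
    simpa [r] using Real.sq_sqrt this
  have hr0 : 0 < r := by
    have : (0:ℝ) < ξ₁ ^ 2 + ξ₂ ^ 2 + b ^ 2 := by positivity
    exact Real.sqrt_pos.mpr this
  have hs0 : s ≠ 0 := ne_of_gt hs
  have hsC : (s : ℂ) ≠ 0 := by exact_mod_cast hs0
  have hξC : (ξ₁ : ℂ) ≠ 0 := by exact_mod_cast hξ₁
  have hdet : M.det = ((-2 * r ^ 3 / (s * ξ₁) : ℝ) : ℂ) := by
    have hsC' : ((ξ₂ : ℂ) ^ 2 + (b : ℂ) ^ 2) ≠ 0 := by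
      have := hs0; simp only [s] at this; exact_mod_cast this
    have key : M.det = -2*(r:ℂ)*((ξ₂:ℂ)^2+(b:ℂ)^2) * ((1/((ξ₂:ℂ)^2+(b:ℂ)^2)) * (1/(ξ₁:ℂ))
        + (ξ₁:ℂ) * (1/((ξ₂:ℂ)^2+(b:ℂ)^2)) * (1/((ξ₂:ℂ)^2+(b:ℂ)^2))) := by
      have h := det_aux (ξ₁:ℂ) ξ₂ b r
      simp only [M, Matrix.det_fin_three, Matrix.cons_val', Matrix.cons_val_zero,
        Matrix.cons_val_one, Matrix.head_cons, Matrix.head_fin_const, Matrix.empty_val',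
        Matrix.cons_val_fin_one, Matrix.cons_val_two, Matrix.tail_cons, s,
        Matrix.of_apply, Fin.isValue]
      push_cast
      linear_combination h
    rw [key]
    have hr3 : r ^ 3 = r * (ξ₁ ^ 2 + ξ₂ ^ 2 + b ^ 2) := by
      rw [pow_succ, hr2]; ring
    simp only [s]
    rw [hr3]
    push_cast
    field_simp
    ring
  have habs : ‖M.det‖ = 2 * r ^ 3 / (s * |ξ₁|) := by
    rw [hdet, Complex.norm_real, Real.norm_eq_abs, abs_div, abs_mul, abs_mul]
    rw [abs_of_pos (by positivity : (0:ℝ) < r ^ 3), abs_of_pos hs]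
    norm_num
    rfl
  have h2 : 2 ≤ ‖M.det‖ := by
    rw [habs, le_div_iff₀ (by positivity)]
    have h1 : |ξ₁| ≤ r := by
      nlinarith [abs_nonneg ξ₁, _root_.sq_abs ξ₁, hr0.le]
    have h2 : s ≤ r ^ 2 := by simp only [s]; linarith [hr2, sq_nonneg ξ₁]
    nlinarith [hr0, abs_pos.mpr hξ₁]
  refine ⟨habs, h2, ?_⟩
  rw [Matrix.isUnit_iff_isUnit_det, isUnit_iff_ne_zero]
  intro h
  rw [h] at h2
  simp at h2
  linarith
end

section
/- Let ξ₁, ξ₂, b be real numbers with ξ₁ ≠ 0 and s := ξ₂² + b² > 0, and set r := √(ξ₁² + ξ₂² + b²). Then the vectors q⁺ := ((−ξ₂ r + i ξ₁ b)/s, (ξ₁ ξ₂ − i b r)/s, 1) and q⁻ := ((ξ₂ r + i ξ₁ b)/s, (ξ₁ ξ₂ + i b r)/s, 1) are eigenvectors of the matrix A := [[0, iξ₁, iξ₂], [iξ₁, 0, −b], [iξ₂, b, 0]]: A q⁺ = −i r q⁺ and A q⁻ = i r q⁻. -/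
open Complex Matrix

/-- the Poincaré vectors `q⁺`, `q⁻` are eigenvectors of the symbol
matrix `A` with eigenvalues `−i r` and `i r` respectively. -/
theorem poincare_vectors_eigenvectors (ξ₁ ξ₂ b : ℝ) (hξ₁ : ξ₁ ≠ 0)
    (hs : ξ₂ ^ 2 + b ^ 2 > 0) :
    let r : ℝ := Real.sqrt (ξ₁ ^ 2 + ξ₂ ^ 2 + b ^ 2)
    let s : ℝ := ξ₂ ^ 2 + b ^ 2
    let A : Matrix (Fin 3) (Fin 3) ℂ :=
      !![0, Complex.I * (ξ₁ : ℝ), Complex.I * (ξ₂ : ℝ);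
         Complex.I * (ξ₁ : ℝ), 0, -(b : ℝ);
         Complex.I * (ξ₂ : ℝ), (b : ℝ), 0]
    let qp : Fin 3 → ℂ :=
      ![((-(ξ₂ * r) : ℝ) + Complex.I * (ξ₁ * b : ℝ)) / (s : ℝ),
        ((ξ₁ * ξ₂ : ℝ) - Complex.I * (b * r : ℝ)) / (s : ℝ), 1]
    let qm : Fin 3 → ℂ :=
      ![((ξ₂ * r : ℝ) + Complex.I * (ξ₁ * b : ℝ)) / (s : ℝ),
        ((ξ₁ * ξ₂ : ℝ) + Complex.I * (b * r : ℝ)) / (s : ℝ), 1]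
    A *ᵥ qp = (-(Complex.I * (r : ℝ))) • qp ∧ A *ᵥ qm = (Complex.I * (r : ℝ)) • qm := by
  intro r s A qp qm
  have hsne : ((ξ₂ : ℂ) ^ 2 + (b : ℂ) ^ 2) ≠ 0 := by exact_mod_cast (ne_of_gt hs)
  have hr2 : (r : ℂ) ^ 2 = (ξ₁ : ℂ) ^ 2 + (ξ₂ : ℂ) ^ 2 + (b : ℂ) ^ 2 := by
    have h : r ^ 2 = ξ₁ ^ 2 + ξ₂ ^ 2 + b ^ 2 := Real.sq_sqrt (by positivity)
    exact_mod_cast h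
  constructor <;>
  · funext i
    fin_cases i <;>
      simp only [A, qp, qm, mulVec, dotProduct, Fin.sum_univ_three, Pi.smul_apply,
        Matrix.cons_val_zero, Matrix.cons_val_one, Matrix.head_cons, Matrix.cons_val',
        Matrix.cons_val_fin_one, Matrix.empty_val', Matrix.head_fin_const, smul_eq_mul, Matrix.of_apply] <;>
      simp only [s] <;> push_cast <;> field_simp
    · linear_combination (-(Complex.I * (ξ₂ : ℂ))) * hr2
    · linear_combination ((b : ℂ) * ((ξ₁ : ℂ) ^ 2 - (r : ℂ) ^ 2)) * Complex.I_sq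
        + (b : ℂ) * hr2
    · linear_combination ((ξ₂ : ℂ) * (ξ₁ : ℂ) * (b : ℂ)) * Complex.I_sq
end

section
/- Let ξ₁, ξ₂, b be real numbers with r := √(ξ₁² + ξ₂² + b²) > 0. Then the matrix A := [[0, iξ₁, iξ₂], [iξ₁, 0, −b], [iξ₂, b, 0]] is skew-Hermitian, and its spectrum (as a complex matrix) is exactly the set {0, i r, −i r}, consisting of three distinct purely imaginary eigenvalues. -/
open Complex Matrix

/-- the symbol matrix `A` is skew-Hermitian and its spectrum is
exactly `{0, i r, −i r}`, three distinct purely imaginary eigenvalues. -/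
theorem symbol_matrix_skewHermitian_spectrum (ξ₁ ξ₂ b : ℝ)
    (hr : Real.sqrt (ξ₁ ^ 2 + ξ₂ ^ 2 + b ^ 2) > 0) :
    let r : ℝ := Real.sqrt (ξ₁ ^ 2 + ξ₂ ^ 2 + b ^ 2)
    let A : Matrix (Fin 3) (Fin 3) ℂ :=
      !![0, Complex.I * (ξ₁ : ℝ), Complex.I * (ξ₂ : ℝ);
         Complex.I * (ξ₁ : ℝ), 0, -(b : ℝ);
         Complex.I * (ξ₂ : ℝ), (b : ℝ), 0]
    Aᴴ = -A ∧
      spectrum ℂ A = {0, Complex.I * (r : ℝ), -(Complex.I * (r : ℝ))} ∧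
      ((0 : ℂ) ≠ Complex.I * (r : ℝ) ∧ (0 : ℂ) ≠ -(Complex.I * (r : ℝ)) ∧
        Complex.I * (r : ℝ) ≠ -(Complex.I * (r : ℝ))) ∧
      (∀ z ∈ spectrum ℂ A, z.re = 0) := by
  intro r A
  have hr2 : ((r : ℝ) : ℂ) ^ 2 = (ξ₁ : ℂ) ^ 2 + (ξ₂ : ℂ) ^ 2 + (b : ℂ) ^ 2 := by
    have h : (r : ℝ) ^ 2 = ξ₁ ^ 2 + ξ₂ ^ 2 + b ^ 2 := Real.sq_sqrt (by positivity)
    exact_mod_cast congrArg (Complex.ofReal) h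
  have hrne : ((r : ℝ) : ℂ) ≠ 0 := by
    exact_mod_cast ne_of_gt hr
  have hspec : ∀ z : ℂ, z ∈ spectrum ℂ A ↔
      (z = 0 ∨ z = Complex.I * (r : ℝ) ∨ z = -(Complex.I * (r : ℝ))) := by
    intro z
    rw [spectrum.mem_iff, Matrix.isUnit_iff_isUnit_det, isUnit_iff_ne_zero, not_ne_iff]
    have hdet : (algebraMap ℂ (Matrix (Fin 3) (Fin 3) ℂ) z - A).det
        = z * (z - Complex.I * (r : ℝ)) * (z + Complex.I * (r : ℝ)) := by
      show (algebraMap ℂ (Matrix (Fin 3) (Fin 3) ℂ) z -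
        !![0, Complex.I * (ξ₁ : ℝ), Complex.I * (ξ₂ : ℝ);
           Complex.I * (ξ₁ : ℝ), 0, -(b : ℝ);
           Complex.I * (ξ₂ : ℝ), (b : ℝ), 0]).det = _
      have : z * (z - Complex.I * (r : ℝ)) * (z + Complex.I * (r : ℝ))
          = z ^ 3 + ((ξ₁ : ℂ) ^ 2 + (ξ₂ : ℂ) ^ 2 + (b : ℂ) ^ 2) * z := by
        linear_combination (-(((ξ₁ : ℂ) ^ 2 + (ξ₂ : ℂ) ^ 2 + (b : ℂ) ^ 2) * z)) * Complex.I_sq +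
          (-(Complex.I ^ 2 * z)) * hr2
      rw [this]
      simp [Matrix.det_fin_three, Matrix.algebraMap_matrix_apply, Matrix.sub_apply]
      ring_nf
      simp [Complex.I_sq]
    rw [hdet, mul_eq_zero, mul_eq_zero, sub_eq_zero, add_eq_zero_iff_eq_neg, or_assoc]
  refine ⟨?_, ?_, ⟨?_, ?_, ?_⟩, ?_⟩
  · ext i j
    fin_cases i <;> fin_cases j <;>
      simp [A, Matrix.conjTranspose_apply, Complex.ext_iff]
  · ext z
    rw [hspec z]
    simp [Set.mem_insert_iff]
  · intro h
    exact (mul_ne_zero Complex.I_ne_zero hrne) h.symm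
  · intro h
    exact (mul_ne_zero Complex.I_ne_zero hrne) (neg_eq_zero.mp h.symm)
  · intro h
    have h2 : (2 : ℂ) * (Complex.I * (r : ℝ)) = 0 := by linear_combination h
    rcases mul_eq_zero.mp h2 with h2 | h2
    · exact two_ne_zero h2
    · exact (mul_ne_zero Complex.I_ne_zero hrne) h2
  · intro z hz
    rcases (hspec z).mp hz with rfl | rfl | rfl
    · simp
    · simp
    · simp
end

section
/- Let b : ℝ → ℝ be C¹, let ε > 0 and let ξ₁, τ be real numbers with τ ≠ 0 and τ² ≠ ξ₁². Suppose R, V₁, V₂ : ℝ → ℂ are C² and the function U(t, x₁, x₂) := exp(i(ξ₁ x₁ − τ t)/ε) · (R(x₂), V₁(x₂), V₂(x₂)) solves the linearized rotating shallow water system with Coriolis parameter b(x₂)/ε. Then: (i) V₁ = i(b τ V₂ − ε ξ₁ V₂′)/(τ² − ξ₁²); (ii) R = i(ξ₁ b V₂ − ε τ V₂′)/(τ² − ξ₁²); and (iii) V₂ satisfies the second-order ODE ε² V₂″(x₂) + (τ² − ξ₁² − b(x₂)² − ε ξ₁ b′(x₂)/τ) V₂(x₂) = 0 for all x₂. -/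
open Complex

lemma phase_hasDerivAt (a c K : ℂ) (s : ℝ) :
    HasDerivAt (fun s : ℝ => Complex.exp (a + c * s) * K)
      (c * (Complex.exp (a + c * s) * K)) s := by
  have h1 : HasDerivAt (fun s : ℝ => a + c * (s : ℂ)) c s := by
    simpa using ((Complex.ofRealCLM.hasDerivAt (x := s)).const_mul c).const_add a
  have := (h1.cexp).mul_const K
  rw [show c * (Complex.exp (a + c * s) * K) = Complex.exp (a + c * s) * c * K by ring]
  exact this

lemma derivT (ε ξ₁ τ x₁ : ℝ) (K : ℂ) (t : ℝ) :
    deriv (fun s : ℝ => Complex.exp (Complex.I * ((ξ₁ * x₁ - τ * s : ℝ)) / (ε : ℝ)) * K) t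
      = (-(Complex.I * τ) / ε) *
        (Complex.exp (Complex.I * ((ξ₁ * x₁ - τ * t : ℝ)) / ε) * K) := by
  have he : (fun s : ℝ => Complex.exp (Complex.I * ((ξ₁ * x₁ - τ * s : ℝ)) / (ε : ℝ)) * K)
      = fun s : ℝ => Complex.exp (Complex.I * ξ₁ * x₁ / ε + (-(Complex.I * τ) / ε) * s) * K := by
    funext s
    congr 1
    push_cast
    ring
  rw [he, (phase_hasDerivAt _ _ _ _).deriv]
  congr 2
  push_cast
  ring

lemma derivX (ε ξ₁ τ t : ℝ) (K : ℂ) (x₁ : ℝ) :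
    deriv (fun y : ℝ => Complex.exp (Complex.I * ((ξ₁ * y - τ * t : ℝ)) / (ε : ℝ)) * K) x₁
      = ((Complex.I * ξ₁) / ε) *
        (Complex.exp (Complex.I * ((ξ₁ * x₁ - τ * t : ℝ)) / ε) * K) := by
  have he : (fun y : ℝ => Complex.exp (Complex.I * ((ξ₁ * y - τ * t : ℝ)) / (ε : ℝ)) * K)
      = fun y : ℝ => Complex.exp (-(Complex.I * τ * t) / ε + ((Complex.I * ξ₁) / ε) * y) * K := by
    funext y
    congr 1
    push_cast
    ring
  rw [he, (phase_hasDerivAt _ _ _ _).deriv]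
  congr 2
  push_cast
  ring

/-- The linearized rotating shallow water system with Coriolis parameter `Bt x₂`
for `U = (ρ, u₁, u₂) : ℝ_t × ℝ² → ℂ³`. -/
def SolvesRSW (Bt : ℝ → ℝ) (ρ u₁ u₂ : ℝ → ℝ → ℝ → ℂ) : Prop :=
  ∀ t x₁ x₂ : ℝ,
    deriv (fun s => ρ s x₁ x₂) t + deriv (fun y => u₁ t y x₂) x₁
        + deriv (fun y => u₂ t x₁ y) x₂ = 0 ∧
    deriv (fun s => u₁ s x₁ x₂) t + deriv (fun y => ρ t y x₂) x₁
        - (Bt x₂ : ℂ) * u₂ t x₁ x₂ = 0 ∧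
    deriv (fun s => u₂ s x₁ x₂) t + deriv (fun y => ρ t x₁ y) x₂
        + (Bt x₂ : ℂ) * u₁ t x₁ x₂ = 0

/-- reduction of the linearized rotating shallow water system, for
a mode of horizontal frequency `ξ₁` and temporal frequency `τ`, to a scalar
second order ODE for the second velocity component. -/
theorem RSW_reduction_to_scalar (b : ℝ → ℝ) (hb : ContDiff ℝ 1 b)
    (ε : ℝ) (hε : ε > 0) (ξ₁ τ : ℝ) (hτ : τ ≠ 0) (hττ : τ ^ 2 ≠ ξ₁ ^ 2)
    (R V₁ V₂ : ℝ → ℂ) (hR : ContDiff ℝ 2 R) (hV₁ : ContDiff ℝ 2 V₁)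
    (hV₂ : ContDiff ℝ 2 V₂)
    (hU : SolvesRSW (fun x₂ => b x₂ / ε)
      (fun t x₁ x₂ => Complex.exp (Complex.I * ((ξ₁ * x₁ - τ * t : ℝ)) / (ε : ℝ)) * R x₂)
      (fun t x₁ x₂ => Complex.exp (Complex.I * ((ξ₁ * x₁ - τ * t : ℝ)) / (ε : ℝ)) * V₁ x₂)
      (fun t x₁ x₂ => Complex.exp (Complex.I * ((ξ₁ * x₁ - τ * t : ℝ)) / (ε : ℝ)) * V₂ x₂)) :
    (∀ x₂ : ℝ, V₁ x₂ =
        Complex.I * ((b x₂ : ℂ) * (τ : ℂ) * V₂ x₂ - (ε : ℂ) * (ξ₁ : ℂ) * deriv V₂ x₂)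
          / ((τ ^ 2 - ξ₁ ^ 2 : ℝ) : ℂ)) ∧
    (∀ x₂ : ℝ, R x₂ =
        Complex.I * ((ξ₁ : ℂ) * (b x₂ : ℂ) * V₂ x₂ - (ε : ℂ) * (τ : ℂ) * deriv V₂ x₂)
          / ((τ ^ 2 - ξ₁ ^ 2 : ℝ) : ℂ)) ∧
    (∀ x₂ : ℝ, (ε ^ 2 : ℂ) * deriv (deriv V₂) x₂
        + ((τ ^ 2 - ξ₁ ^ 2 - (b x₂) ^ 2 - ε * ξ₁ * deriv b x₂ / τ : ℝ) : ℂ) * V₂ x₂ = 0) := by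
  have hεc : (ε : ℂ) ≠ 0 := by exact_mod_cast hε.ne'
  have hτc : (τ : ℂ) ≠ 0 := by exact_mod_cast hτ
  have hD : ((τ ^ 2 - ξ₁ ^ 2 : ℝ) : ℂ) ≠ 0 := by
    exact_mod_cast sub_ne_zero.mpr hττ
  have hDc : ((τ : ℂ) ^ 2 - (ξ₁ : ℂ) ^ 2) ≠ 0 := by push_cast at hD; exact hD
  have hV₂d : Differentiable ℝ V₂ := hV₂.differentiable (by norm_num)
  have hRd : Differentiable ℝ R := hR.differentiable (by norm_num)
  have hbd : Differentiable ℝ b := hb.differentiable (by norm_num)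
  have hV₂dd : Differentiable ℝ (deriv V₂) := by
    have h2 : ContDiff ℝ ((1 : ℕ) + 1) V₂ := by exact_mod_cast hV₂
    exact ((contDiff_succ_iff_deriv.mp h2).2.2).differentiable (by norm_num)
  -- the three scalar equations (evaluating the PDE at t = 0, x₁ = 0)
  have F1 : ∀ x₂ : ℝ, -(Complex.I * τ) * R x₂ + Complex.I * ξ₁ * V₁ x₂
      + (ε : ℂ) * deriv V₂ x₂ = 0 := by
    intro x₂
    have h := (hU 0 0 x₂).1
    rw [derivT, derivX, deriv_const_mul _ (hV₂d x₂)] at h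
    simp only [mul_zero, zero_mul, zero_sub, mul_neg, Complex.ofReal_zero, sub_zero,
      Complex.ofReal_mul] at h
    have h' : (ε : ℂ) * (-(Complex.I * τ) * R x₂ + Complex.I * ξ₁ * V₁ x₂
        + (ε : ℂ) * deriv V₂ x₂) = 0 := by
      field_simp at h
      simp only [zero_div, Complex.exp_zero, one_mul] at h
      linear_combination (ε : ℂ) * h
    exact (mul_eq_zero.mp h').resolve_left hεc
  have F2 : ∀ x₂ : ℝ, -(Complex.I * τ) * V₁ x₂ + Complex.I * ξ₁ * R x₂
      - ((b x₂ : ℝ) : ℂ) * V₂ x₂ = 0 := by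
    intro x₂
    have h := (hU 0 0 x₂).2.1
    rw [derivT, derivX] at h
    simp only [mul_zero, zero_mul, zero_sub, mul_neg, Complex.ofReal_zero, sub_zero,
      Complex.ofReal_mul] at h
    push_cast at h
    have h' : (ε : ℂ) ^ 2 * (-(Complex.I * τ) * V₁ x₂ + Complex.I * ξ₁ * R x₂
        - ((b x₂ : ℝ) : ℂ) * V₂ x₂) = 0 := by
      field_simp at h
      simp only [zero_div, Complex.exp_zero, one_mul] at h
      linear_combination (ε : ℂ) ^ 2 * h
    exact (mul_eq_zero.mp h').resolve_left (pow_ne_zero 2 hεc)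
  have F3 : ∀ x₂ : ℝ, -(Complex.I * τ) * V₂ x₂ + (ε : ℂ) * deriv R x₂
      + ((b x₂ : ℝ) : ℂ) * V₁ x₂ = 0 := by
    intro x₂
    have h := (hU 0 0 x₂).2.2
    rw [derivT, deriv_const_mul _ (hRd x₂)] at h
    simp only [mul_zero, zero_mul, zero_sub, mul_neg, Complex.ofReal_zero, sub_zero,
      Complex.ofReal_mul] at h
    push_cast at h
    field_simp at h
    simp only [zero_div, Complex.exp_zero, one_mul] at h
    linear_combination h
  -- key algebraic identities
  have h1 : ∀ x₂ : ℝ, ((τ ^ 2 - ξ₁ ^ 2 : ℝ) : ℂ) * V₁ x₂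
      = Complex.I * ((b x₂ : ℂ) * (τ : ℂ) * V₂ x₂ - (ε : ℂ) * (ξ₁ : ℂ) * deriv V₂ x₂) := by
    intro x₂
    push_cast
    linear_combination (Complex.I * ξ₁) * F1 x₂ + (Complex.I * τ) * F2 x₂
      + (((τ : ℂ) ^ 2 - (ξ₁ : ℂ) ^ 2) * V₁ x₂) * Complex.I_sq
  have h2 : ∀ x₂ : ℝ, ((τ ^ 2 - ξ₁ ^ 2 : ℝ) : ℂ) * R x₂
      = Complex.I * ((ξ₁ : ℂ) * (b x₂ : ℂ) * V₂ x₂ - (ε : ℂ) * (τ : ℂ) * deriv V₂ x₂) := by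
    intro x₂
    push_cast
    linear_combination (Complex.I * τ) * F1 x₂ + (Complex.I * ξ₁) * F2 x₂
      + (((τ : ℂ) ^ 2 - (ξ₁ : ℂ) ^ 2) * R x₂) * Complex.I_sq
  have c1 : ∀ x₂ : ℝ, V₁ x₂ =
      Complex.I * ((b x₂ : ℂ) * (τ : ℂ) * V₂ x₂ - (ε : ℂ) * (ξ₁ : ℂ) * deriv V₂ x₂)
        / ((τ ^ 2 - ξ₁ ^ 2 : ℝ) : ℂ) := by
    intro x₂
    rw [eq_div_iff hD]
    linear_combination h1 x₂
  have c2 : ∀ x₂ : ℝ, R x₂ =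
      Complex.I * ((ξ₁ : ℂ) * (b x₂ : ℂ) * V₂ x₂ - (ε : ℂ) * (τ : ℂ) * deriv V₂ x₂)
        / ((τ ^ 2 - ξ₁ ^ 2 : ℝ) : ℂ) := by
    intro x₂
    rw [eq_div_iff hD]
    linear_combination h2 x₂
  refine ⟨c1, c2, ?_⟩
  -- the second order ODE
  intro x₂
  -- derivative of R via its formula
  have hRfun : R = fun x => Complex.I * ((ξ₁ : ℂ) * (b x : ℂ) * V₂ x
      - (ε : ℂ) * (τ : ℂ) * deriv V₂ x) / ((τ ^ 2 - ξ₁ ^ 2 : ℝ) : ℂ) := funext c2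
  have hbC : HasDerivAt (fun x : ℝ => ((b x : ℂ))) (((deriv b x₂ : ℝ) : ℂ)) x₂ :=
    ((hbd x₂).hasDerivAt).ofReal_comp
  have hV₂C : HasDerivAt V₂ (deriv V₂ x₂) x₂ := (hV₂d x₂).hasDerivAt
  have hV₂C2 : HasDerivAt (deriv V₂) (deriv (deriv V₂) x₂) x₂ := (hV₂dd x₂).hasDerivAt
  have hder : HasDerivAt (fun x => Complex.I * ((ξ₁ : ℂ) * (b x : ℂ) * V₂ x
      - (ε : ℂ) * (τ : ℂ) * deriv V₂ x) / ((τ ^ 2 - ξ₁ ^ 2 : ℝ) : ℂ))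
      (Complex.I * ((ξ₁ : ℂ) * (((deriv b x₂ : ℝ) : ℂ) * V₂ x₂ + (b x₂ : ℂ) * deriv V₂ x₂)
        - (ε : ℂ) * (τ : ℂ) * deriv (deriv V₂) x₂) / ((τ ^ 2 - ξ₁ ^ 2 : ℝ) : ℂ)) x₂ := by
    have hm : HasDerivAt (fun x : ℝ => (ξ₁ : ℂ) * (b x : ℂ) * V₂ x)
        ((ξ₁ : ℂ) * (((deriv b x₂ : ℝ) : ℂ) * V₂ x₂ + (b x₂ : ℂ) * deriv V₂ x₂)) x₂ := by
      have := ((hbC.const_mul (ξ₁ : ℂ)).mul hV₂C)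
      rw [show (ξ₁ : ℂ) * (((deriv b x₂ : ℝ) : ℂ) * V₂ x₂ + (b x₂ : ℂ) * deriv V₂ x₂) = (ξ₁ : ℂ) * ((deriv b x₂ : ℝ) : ℂ) * V₂ x₂ + (ξ₁ : ℂ) * (b x₂ : ℂ) * deriv V₂ x₂ by ring]
      exact this
    have := ((hm.sub (hV₂C2.const_mul ((ε : ℂ) * (τ : ℂ)))).const_mul Complex.I).div_const
      ((τ ^ 2 - ξ₁ ^ 2 : ℝ) : ℂ)
    exact this
  have HderivR : ((τ ^ 2 - ξ₁ ^ 2 : ℝ) : ℂ) * deriv R x₂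
      = Complex.I * ((ξ₁ : ℂ) * (((deriv b x₂ : ℝ) : ℂ) * V₂ x₂ + (b x₂ : ℂ) * deriv V₂ x₂)
        - (ε : ℂ) * (τ : ℂ) * deriv (deriv V₂) x₂) := by
    have : deriv R x₂ = Complex.I * ((ξ₁ : ℂ) * (((deriv b x₂ : ℝ) : ℂ) * V₂ x₂
        + (b x₂ : ℂ) * deriv V₂ x₂) - (ε : ℂ) * (τ : ℂ) * deriv (deriv V₂) x₂)
          / ((τ ^ 2 - ξ₁ ^ 2 : ℝ) : ℂ) := by
      conv_lhs => rw [hRfun]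
      exact hder.deriv
    rw [this, mul_comm, div_mul_cancel₀ _ hD]
  push_cast at HderivR
  have H1 := h1 x₂
  push_cast at H1
  have K : (τ : ℂ) ^ 2 * (ε : ℂ) ^ 2 * deriv (deriv V₂) x₂
      + ((τ : ℂ) ^ 2 * ((τ : ℂ) ^ 2 - (ξ₁ : ℂ) ^ 2 - (b x₂ : ℂ) ^ 2)
        - (τ : ℂ) * (ε : ℂ) * (ξ₁ : ℂ) * ((deriv b x₂ : ℝ) : ℂ)) * V₂ x₂ = 0 := by
    linear_combination (Complex.I * τ * ((τ : ℂ) ^ 2 - (ξ₁ : ℂ) ^ 2)) * F3 x₂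
      + (-(Complex.I * τ) * (b x₂ : ℂ)) * H1
      + (-(Complex.I * τ) * (ε : ℂ)) * HderivR
      + ((τ : ℂ) ^ 2 * (ε : ℂ) ^ 2 * deriv (deriv V₂) x₂
        + ((τ : ℂ) ^ 2 * ((τ : ℂ) ^ 2 - (ξ₁ : ℂ) ^ 2 - (b x₂ : ℂ) ^ 2)
          - (τ : ℂ) * (ε : ℂ) * (ξ₁ : ℂ) * ((deriv b x₂ : ℝ) : ℂ)) * V₂ x₂) * Complex.I_sq
  push_cast
  have hK2 : ((τ : ℂ) ^ 2) * ((ε : ℂ) ^ 2 * deriv (deriv V₂) x₂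
      + ((τ : ℂ) ^ 2 - (ξ₁ : ℂ) ^ 2 - (b x₂ : ℂ) ^ 2
        - (ε : ℂ) * (ξ₁ : ℂ) * ((deriv b x₂ : ℝ) : ℂ) / (τ : ℂ)) * V₂ x₂) = 0 := by
    field_simp
    linear_combination K
  have := (mul_eq_zero.mp hK2).resolve_left (pow_ne_zero 2 hτc)
  linear_combination this
end

section
/- Let b : ℝ → ℝ be C¹, let ε > 0 and let ξ₁, τ be real numbers with τ ≠ 0 and τ² ≠ ξ₁². Suppose V₂ : ℝ → ℂ is C² and satisfies ε² V₂″(x₂) + (τ² − ξ₁² − b(x₂)² − ε ξ₁ b′(x₂)/τ) V₂(x₂) = 0 for all x₂. Define V₁ := i(b τ V₂ − ε ξ₁ V₂′)/(τ² − ξ₁²) and R := i(ξ₁ b V₂ − ε τ V₂′)/(τ² − ξ₁²). Then U(t, x₁, x₂) := exp(i(ξ₁ x₁ − τ t)/ε) · (R(x₂), V₁(x₂), V₂(x₂)) is an exact solution of the linearized rotating shallow water system with Coriolis parameter b(x₂)/ε. -/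
open Complex

private lemma expDeriv_t (ξ₁ τ ε x₁ t : ℝ) (C : ℂ) :
    HasDerivAt (fun s : ℝ => Complex.exp (Complex.I * ((ξ₁ * x₁ - τ * s : ℝ)) / (ε : ℝ)) * C)
      (Complex.exp (Complex.I * ((ξ₁ * x₁ - τ * t : ℝ)) / (ε : ℝ)) * (Complex.I * (-τ) / ε) * C) t := by
  have h1 : HasDerivAt (fun s : ℝ => ξ₁ * x₁ - τ * s) (-τ) t := by
    exact ((hasDerivAt_const t (ξ₁ * x₁)).sub ((hasDerivAt_id' t).const_mul τ)).congr_deriv (by ring)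
  have h3 := (((h1.ofReal_comp).const_mul Complex.I).div_const (ε : ℂ)).cexp.mul_const C
  exact h3.congr_deriv (by push_cast; ring)

private lemma expDeriv_x (ξ₁ τ ε t x₁ : ℝ) (C : ℂ) :
    HasDerivAt (fun y : ℝ => Complex.exp (Complex.I * ((ξ₁ * y - τ * t : ℝ)) / (ε : ℝ)) * C)
      (Complex.exp (Complex.I * ((ξ₁ * x₁ - τ * t : ℝ)) / (ε : ℝ)) * (Complex.I * ξ₁ / ε) * C) x₁ := by
  have h1 : HasDerivAt (fun y : ℝ => ξ₁ * y - τ * t) ξ₁ x₁ := by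
    exact (((hasDerivAt_id' x₁).const_mul ξ₁).sub (hasDerivAt_const x₁ (τ * t))).congr_deriv (by ring)
  have h3 := (((h1.ofReal_comp).const_mul Complex.I).div_const (ε : ℂ)).cexp.mul_const C
  convert h3 using 1 <;> (push_cast; ring)

private theorem main (b : ℝ → ℝ) (hb : ContDiff ℝ 1 b)
    (ε : ℝ) (hε : ε > 0) (ξ₁ τ : ℝ) (hτ : τ ≠ 0) (hττ : τ ^ 2 ≠ ξ₁ ^ 2)
    (V₂ : ℝ → ℂ) (hV₂ : ContDiff ℝ 2 V₂)
    (hODE : ∀ x₂ : ℝ, (ε ^ 2 : ℂ) * deriv (deriv V₂) x₂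
        + ((τ ^ 2 - ξ₁ ^ 2 - (b x₂) ^ 2 - ε * ξ₁ * deriv b x₂ / τ : ℝ) : ℂ) * V₂ x₂ = 0)
    (V₁ R : ℝ → ℂ)
    (hV₁ : V₁ = fun x₂ =>
      Complex.I * ((b x₂ : ℂ) * (τ : ℂ) * V₂ x₂ - (ε : ℂ) * (ξ₁ : ℂ) * deriv V₂ x₂)
        / ((τ ^ 2 - ξ₁ ^ 2 : ℝ) : ℂ))
    (hR : R = fun x₂ =>
      Complex.I * ((ξ₁ : ℂ) * (b x₂ : ℂ) * V₂ x₂ - (ε : ℂ) * (τ : ℂ) * deriv V₂ x₂)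
        / ((τ ^ 2 - ξ₁ ^ 2 : ℝ) : ℂ)) :
    SolvesRSW (fun x₂ => b x₂ / ε)
      (fun t x₁ x₂ => Complex.exp (Complex.I * ((ξ₁ * x₁ - τ * t : ℝ)) / (ε : ℝ)) * R x₂)
      (fun t x₁ x₂ => Complex.exp (Complex.I * ((ξ₁ * x₁ - τ * t : ℝ)) / (ε : ℝ)) * V₁ x₂)
      (fun t x₁ x₂ => Complex.exp (Complex.I * ((ξ₁ * x₁ - τ * t : ℝ)) / (ε : ℝ)) * V₂ x₂) := by
  subst hV₁ hR
  intro t x₁ x₂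
  beta_reduce
  have hε' : (ε : ℂ) ≠ 0 := by exact_mod_cast hε.ne'
  have hτ' : (τ : ℂ) ≠ 0 := by exact_mod_cast hτ
  have hD2 : (τ : ℂ) ^ 2 - (ξ₁ : ℂ) ^ 2 ≠ 0 := by
    rw [sub_ne_zero]
    exact_mod_cast hττ
  -- derivative facts at x₂
  have hbd : HasDerivAt (fun y : ℝ => ((b y : ℝ) : ℂ)) ((deriv b x₂ : ℝ) : ℂ) x₂ :=
    ((hb.differentiable one_ne_zero).differentiableAt.hasDerivAt).ofReal_comp
  have hV1 : HasDerivAt V₂ (deriv V₂ x₂) x₂ :=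
    ((hV₂.differentiable (by norm_num)).differentiableAt).hasDerivAt
  have hV2 : HasDerivAt (deriv V₂) (deriv (deriv V₂) x₂) x₂ := by
    have : Differentiable ℝ (deriv V₂) :=
      (contDiff_succ_iff_deriv.mp (by exact_mod_cast hV₂ : ContDiff ℝ (1+1) V₂)).2.2.differentiable
        one_ne_zero
    exact this.differentiableAt.hasDerivAt
  obtain ⟨E, hE⟩ : ∃ E : ℂ, Complex.exp (Complex.I * ((ξ₁ * x₁ - τ * t : ℝ)) / (ε : ℝ)) = E :=
    ⟨_, rfl⟩
  -- x₂-derivative of E * V₂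
  have du₂ : deriv (fun y => E * V₂ y) x₂ = E * deriv V₂ x₂ := (hV1.const_mul E).deriv
  -- x₂-derivative of E * R
  have hRd : HasDerivAt (fun y : ℝ =>
      Complex.I * ((ξ₁ : ℂ) * (b y : ℂ) * V₂ y - (ε : ℂ) * (τ : ℂ) * deriv V₂ y)
        / ((τ ^ 2 - ξ₁ ^ 2 : ℝ) : ℂ))
      (Complex.I * (((ξ₁ : ℂ) * ((deriv b x₂ : ℝ) : ℂ) * V₂ x₂ + (ξ₁ : ℂ) * (b x₂ : ℂ) * deriv V₂ x₂)
        - (ε : ℂ) * (τ : ℂ) * deriv (deriv V₂) x₂) / ((τ ^ 2 - ξ₁ ^ 2 : ℝ) : ℂ)) x₂ := by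
    have h1 : HasDerivAt (fun y : ℝ => (ξ₁ : ℂ) * (b y : ℂ) * V₂ y)
        ((ξ₁ : ℂ) * ((deriv b x₂ : ℝ) : ℂ) * V₂ x₂ + (ξ₁ : ℂ) * (b x₂ : ℂ) * deriv V₂ x₂) x₂ := by
      exact (hbd.const_mul (ξ₁ : ℂ)).mul hV1
    have h2 : HasDerivAt (fun y : ℝ => (ε : ℂ) * (τ : ℂ) * deriv V₂ y)
        ((ε : ℂ) * (τ : ℂ) * deriv (deriv V₂) x₂) x₂ := hV2.const_mul _
    exact ((h1.sub h2).const_mul Complex.I).div_const _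
  have dρ : deriv (fun y => E *
      (Complex.I * ((ξ₁ : ℂ) * (b y : ℂ) * V₂ y - (ε : ℂ) * (τ : ℂ) * deriv V₂ y)
        / ((τ ^ 2 - ξ₁ ^ 2 : ℝ) : ℂ))) x₂ = E *
      (Complex.I * (((ξ₁ : ℂ) * ((deriv b x₂ : ℝ) : ℂ) * V₂ x₂ + (ξ₁ : ℂ) * (b x₂ : ℂ) * deriv V₂ x₂)
        - (ε : ℂ) * (τ : ℂ) * deriv (deriv V₂) x₂) / ((τ ^ 2 - ξ₁ ^ 2 : ℝ) : ℂ)) :=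
    (hRd.const_mul E).deriv
  -- the second derivative of V₂ from the ODE
  have hvv : deriv (deriv V₂) x₂ =
      -(((τ : ℂ) ^ 2 - (ξ₁ : ℂ) ^ 2 - ((b x₂ : ℂ)) ^ 2
        - (ε : ℂ) * (ξ₁ : ℂ) * ((deriv b x₂ : ℝ) : ℂ) / (τ : ℂ)) * V₂ x₂) / (ε : ℂ) ^ 2 := by
    rw [eq_div_iff (pow_ne_zero 2 hε')]
    have h := hODE x₂
    push_cast at h
    linear_combination h
  refine ⟨?_, ?_, ?_⟩
  · rw [(expDeriv_t ξ₁ τ ε x₁ t _).deriv, (expDeriv_x ξ₁ τ ε t x₁ _).deriv, hE, du₂]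
    push_cast
    field_simp [hε', hτ', hD2]
    ring_nf
    rw [Complex.I_sq]
    ring
  · rw [(expDeriv_t ξ₁ τ ε x₁ t _).deriv, (expDeriv_x ξ₁ τ ε t x₁ _).deriv, hE]
    push_cast
    field_simp [hε', hτ', hD2]
    ring_nf
    rw [Complex.I_sq]
    ring
  · rw [(expDeriv_t ξ₁ τ ε x₁ t _).deriv, hE, dρ, hvv]
    push_cast
    field_simp [hε', hτ', hD2]
    ring

/-- converse of the reduction: a solution of the scalar second
order ODE for the second velocity component yields, via the explicit formulas
for `V₁` and `R`, an exact solution of the linearized rotating shallow water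
system with Coriolis parameter `b(x₂)/ε`. -/
theorem scalar_to_RSW_solution (b : ℝ → ℝ) (hb : ContDiff ℝ 1 b)
    (ε : ℝ) (hε : ε > 0) (ξ₁ τ : ℝ) (hτ : τ ≠ 0) (hττ : τ ^ 2 ≠ ξ₁ ^ 2)
    (V₂ : ℝ → ℂ) (hV₂ : ContDiff ℝ 2 V₂)
    (hODE : ∀ x₂ : ℝ, (ε ^ 2 : ℂ) * deriv (deriv V₂) x₂
        + ((τ ^ 2 - ξ₁ ^ 2 - (b x₂) ^ 2 - ε * ξ₁ * deriv b x₂ / τ : ℝ) : ℂ) * V₂ x₂ = 0) :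
    let V₁ : ℝ → ℂ := fun x₂ =>
      Complex.I * ((b x₂ : ℂ) * (τ : ℂ) * V₂ x₂ - (ε : ℂ) * (ξ₁ : ℂ) * deriv V₂ x₂)
        / ((τ ^ 2 - ξ₁ ^ 2 : ℝ) : ℂ)
    let R : ℝ → ℂ := fun x₂ =>
      Complex.I * ((ξ₁ : ℂ) * (b x₂ : ℂ) * V₂ x₂ - (ε : ℂ) * (τ : ℂ) * deriv V₂ x₂)
        / ((τ ^ 2 - ξ₁ ^ 2 : ℝ) : ℂ)
    SolvesRSW (fun x₂ => b x₂ / ε)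
      (fun t x₁ x₂ => Complex.exp (Complex.I * ((ξ₁ * x₁ - τ * t : ℝ)) / (ε : ℝ)) * R x₂)
      (fun t x₁ x₂ => Complex.exp (Complex.I * ((ξ₁ * x₁ - τ * t : ℝ)) / (ε : ℝ)) * V₁ x₂)
      (fun t x₁ x₂ => Complex.exp (Complex.I * ((ξ₁ * x₁ - τ * t : ℝ)) / (ε : ℝ)) * V₂ x₂) := by
  intro V₁ R
  exact main b hb ε hε ξ₁ τ hτ hττ V₂ hV₂ hODE V₁ R rfl rfl
end
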